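/- Every algebraically closed group Γ has commuting cyclic conjugates: for every finitely generated subgroup H = ⟨g₁,…,g_n⟩ ≤ Γ, the system of equations [g_i, x g_j x^{-1}] = e and [g_i, x²] = e (1 ≤ i,j ≤ n) has a solution in some overgroup of Γ (namely the wreath product Γ ≀ ℤ/2, taking x the generator of ℤ/2), hence has a solution t ∈ Γ, which satisfies [H, tHt^{-1}] = 1 and [H, t²] = 1. -/

import Mathlib

universe u

/-- An overgroup of `Γ`: a group together with an injective homomorphism from `Γ`. -/
structure Overgroup (Γ : Type u) [Group Γ] : Type (u + 1) where
  carrier : Type u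
  [grp : Group carrier]
  emb : Γ →* carrier
  inj : Function.Injective emb

attribute [instance] Overgroup.grp

/-- A finite system of equations with constants in `Γ` and variables `x₁, …, x_m`
(encoded as elements of the free group on `Γ ⊕ Fin m`) has a solution in `Λ`
(with constants interpreted via `i : Γ →* Λ`) if the variables can be given
values in `Λ` making every equation hold. -/
def SolvesIn {Γ : Type u} [Group Γ] {Λ : Type u} [Group Λ] (i : Γ →* Λ)
    {m k : ℕ} (w : Fin k → FreeGroup (Γ ⊕ Fin m)) : Prop :=
  ∃ v : Fin m → Λ, ∀ j : Fin k, FreeGroup.lift (Sum.elim (⇑i) v) (w j) = 1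

/-- A group `Γ` is *algebraically closed* if every finite system of equations with
constants in `Γ` that has a solution in some overgroup of `Γ` already has a
solution in `Γ`. -/
def IsAlgebraicallyClosedGroup (Γ : Type u) [Group Γ] : Prop :=
  ∀ (m k : ℕ) (w : Fin k → FreeGroup (Γ ⊕ Fin m)),
    (∃ O : Overgroup Γ, SolvesIn O.emb w) → SolvesIn (MonoidHom.id Γ) w

/-- A group `G` has *commuting cyclic conjugates* if for every finitely generated
subgroup `H ≤ G` there exist `t ∈ G` and `n ∈ ℕ_{≥2} ∪ {∞}` such that
`[H, t^p H t^{-p}] = 1` for all `1 ≤ p < n` and `[H, t^n] = 1` (reading `t^∞ = 1`). -/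
def CommutingCyclicConjugates (G : Type u) [Group G] : Prop :=
  ∀ H : Subgroup G, H.FG → ∃ (t : G) (n : ℕ∞), 2 ≤ n ∧
    (∀ p : ℕ, 1 ≤ p → (p : ℕ∞) < n →
      ∀ h ∈ H, ∀ h' ∈ H, Commute h (t ^ p * h' * (t ^ p)⁻¹)) ∧
    (∀ m : ℕ, (m : ℕ∞) = n → ∀ h ∈ H, Commute h (t ^ m))



section Aux

variable {Γ : Type u} [Group Γ]

/-- The coordinate-swapping automorphism of `Γ × Γ`. -/
def swapAut (Γ : Type u) [Group Γ] : MulAut (Γ × Γ) := (MulEquiv.prodComm : Γ × Γ ≃* Γ × Γ)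

/-- The action of `Multiplicative ℤ` on `Γ × Γ` by swapping, via parity. -/
def swapPhi (Γ : Type u) [Group Γ] : Multiplicative ℤ →* MulAut (Γ × Γ) :=
  zpowersHom _ (swapAut Γ)

/-- The (restricted) wreath-like overgroup `(Γ × Γ) ⋊ ℤ`. -/
abbrev Wr (Γ : Type u) [Group Γ] : Type u :=
  SemidirectProduct (Γ × Γ) (Multiplicative ℤ) (swapPhi Γ)

def wrEmb (Γ : Type u) [Group Γ] : Γ →* Wr Γ :=
  SemidirectProduct.inl.comp (MonoidHom.inl Γ Γ)

lemma wrEmb_injective : Function.Injective (wrEmb Γ) := by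
  intro a b hab
  have := SemidirectProduct.inl_injective hab
  exact congrArg Prod.fst this

lemma swapAut_sq : (swapAut Γ) ^ 2 = 1 := by
  ext p
  · show (swapAut Γ ((swapAut Γ) p)).1 = p.1
    rfl
  · show (swapAut Γ ((swapAut Γ) p)).2 = p.2
    rfl

/-- the distinguished element of the wreath product -/
def wrX (Γ : Type u) [Group Γ] : Wr Γ := SemidirectProduct.inr (Multiplicative.ofAdd 1)

lemma wr_comm₁ (a b : Γ) :
    Commute (wrEmb Γ a) (wrX Γ * wrEmb Γ b * (wrX Γ)⁻¹) := by
  have h1 : wrX Γ * wrEmb Γ b * (wrX Γ)⁻¹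
      = SemidirectProduct.inl ((swapPhi Γ (Multiplicative.ofAdd 1)) (b, 1)) := by
    rw [SemidirectProduct.inl_aut, map_inv]; rfl
  have h2 : (swapPhi Γ (Multiplicative.ofAdd 1)) ((b : Γ), (1 : Γ)) = ((1 : Γ), b) := by
    simp [swapPhi, swapAut]
  rw [h1, h2]
  show Commute (SemidirectProduct.inl ((a, 1) : Γ × Γ)) (SemidirectProduct.inl ((1, b) : Γ × Γ))
  have : Commute ((a, 1) : Γ × Γ) ((1, b) : Γ × Γ) := by
    unfold Commute SemiconjBy
    ext <;> simp
  exact this.map SemidirectProduct.inl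

lemma wr_comm₂ (a : Γ) : Commute (wrEmb Γ a) (wrX Γ ^ 2) := by
  have hx2 : wrX Γ ^ 2 = SemidirectProduct.inr (Multiplicative.ofAdd (2 : ℤ)) := by
    rw [sq, wrX, ← map_mul]
    rfl
  have hphi : swapPhi Γ (Multiplicative.ofAdd (2 : ℤ)) = 1 := by
    have : swapPhi Γ (Multiplicative.ofAdd (2 : ℤ)) = (swapAut Γ) ^ (2 : ℤ) := rfl
    rw [this, zpow_two, ← sq, swapAut_sq]
  have key : wrX Γ ^ 2 * wrEmb Γ a * (wrX Γ ^ 2)⁻¹ = wrEmb Γ a := by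
    rw [hx2]
    show SemidirectProduct.inr (Multiplicative.ofAdd (2:ℤ)) * SemidirectProduct.inl ((a, 1) : Γ × Γ)
        * (SemidirectProduct.inr (Multiplicative.ofAdd (2:ℤ)))⁻¹ = SemidirectProduct.inl ((a, 1) : Γ × Γ)
    rw [← map_inv, ← SemidirectProduct.inl_aut, hphi]
    rfl
  exact (mul_inv_eq_iff_eq_mul.mp key).symm

end Aux

section Eqs

open scoped commutatorElement

variable {Γ : Type u} [Group Γ]

def FA (a : Γ) : FreeGroup (Γ ⊕ Fin 1) := FreeGroup.of (Sum.inl a)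
def FX (Γ : Type u) : FreeGroup (Γ ⊕ Fin 1) := FreeGroup.of (Sum.inr 0)

def eqW₁ (a b : Γ) : FreeGroup (Γ ⊕ Fin 1) := ⁅FA a, FX Γ * FA b * (FX Γ)⁻¹⁆
def eqW₂ (a : Γ) : FreeGroup (Γ ⊕ Fin 1) := ⁅FA a, FX Γ ^ 2⁆

lemma lift_eqW₁ {Λ : Type u} [Group Λ] (i : Γ →* Λ) (v : Fin 1 → Λ) (a b : Γ) :
    FreeGroup.lift (Sum.elim (⇑i) v) (eqW₁ a b) = 1 ↔
      Commute (i a) (v 0 * i b * (v 0)⁻¹) := by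
  rw [eqW₁, map_commutatorElement, commutatorElement_eq_one_iff_commute]
  simp [FA, FX]

lemma lift_eqW₂ {Λ : Type u} [Group Λ] (i : Γ →* Λ) (v : Fin 1 → Λ) (a : Γ) :
    FreeGroup.lift (Sum.elim (⇑i) v) (eqW₂ a) = 1 ↔ Commute (i a) (v 0 ^ 2) := by
  rw [eqW₂, map_commutatorElement, commutatorElement_eq_one_iff_commute]
  simp [FA, FX]

/-- The full system of equations attached to a list of generators. -/
def eqSys (L : List Γ) : Fin (L.length * L.length + L.length) → FreeGroup (Γ ⊕ Fin 1) :=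
  fun j =>
    if h : (j : ℕ) < L.length * L.length then
      have hn : 0 < L.length := by
        rcases Nat.eq_zero_or_pos L.length with h0 | h0
        · simp [h0] at h
        · exact h0
      eqW₁ (L.get ⟨(j : ℕ) / L.length, by
            rwa [Nat.div_lt_iff_lt_mul hn]⟩)
          (L.get ⟨(j : ℕ) % L.length, Nat.mod_lt _ hn⟩)
    else
      eqW₂ (L.get ⟨(j : ℕ) - L.length * L.length, by
        have := j.isLt; omega⟩)

end Eqs

section Closure

variable {G : Type u} [Group G]

lemma closure_comm_conj {S : Set G} {t : G}
    (hc : ∀ a ∈ S, ∀ b ∈ S, Commute a (t * b * t⁻¹)) :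
    ∀ h ∈ Subgroup.closure S, ∀ h' ∈ Subgroup.closure S, Commute h (t * h' * t⁻¹) := by
  have step1 : ∀ b ∈ S, ∀ h ∈ Subgroup.closure S, Commute h (t * b * t⁻¹) := by
    intro b hb h hh
    have hle : Subgroup.closure S ≤ Subgroup.centralizer {t * b * t⁻¹} := by
      rw [Subgroup.closure_le]
      intro a ha
      rw [SetLike.mem_coe, Subgroup.mem_centralizer_iff]
      rintro g (rfl : g = t * b * t⁻¹)
      exact (hc a ha b hb).symm
    have := hle hh
    rw [Subgroup.mem_centralizer_iff] at this
    exact (this _ rfl).symm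
  intro h hh h' hh'
  induction hh' using Subgroup.closure_induction with
  | mem b hb => exact step1 b hb h hh
  | one => simp
  | mul a b _ _ ha hb =>
      have : t * (a * b) * t⁻¹ = (t * a * t⁻¹) * (t * b * t⁻¹) := by group
      rw [this]; exact ha.mul_right hb
  | inv a _ ha =>
      have : t * a⁻¹ * t⁻¹ = (t * a * t⁻¹)⁻¹ := by group
      rw [this]; exact ha.inv_right

lemma closure_comm_elt {S : Set G} {c : G}
    (hc : ∀ a ∈ S, Commute a c) :
    ∀ h ∈ Subgroup.closure S, Commute h c := by
  intro h hh
  have hle : Subgroup.closure S ≤ Subgroup.centralizer {c} := by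
    rw [Subgroup.closure_le]
    intro a ha
    rw [SetLike.mem_coe, Subgroup.mem_centralizer_iff]
    rintro g (rfl : g = c)
    exact (hc a ha).symm
  have := hle hh
  rw [Subgroup.mem_centralizer_iff] at this
  exact (this _ rfl).symm

end Closure

/-- Every algebraically closed group has commuting cyclic conjugates. -/
theorem algebraicallyClosed_commutingCyclicConjugates (Γ : Type u) [Group Γ]
    (h : IsAlgebraicallyClosedGroup Γ) : CommutingCyclicConjugates Γ := by
  intro H hFG
  obtain ⟨S, hS⟩ := hFG
  set L : List Γ := S.toList with hLdef
  have hmem : ∀ a : Γ, a ∈ L ↔ a ∈ (S : Set Γ) := by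
    intro a; simp [hLdef]
  set n : ℕ := L.length with hn
  -- the system has a solution in the wreath-like overgroup
  have hsolW : ∃ O : Overgroup Γ, SolvesIn O.emb (eqSys L) := by
    refine ⟨{ carrier := Wr Γ, grp := inferInstanceAs (Group (Wr Γ)),
              emb := wrEmb Γ, inj := wrEmb_injective }, ⟨fun _ => wrX Γ, ?_⟩⟩
    intro j
    unfold eqSys
    split
    · exact (lift_eqW₁ (wrEmb Γ) (fun _ => wrX Γ) _ _).mpr (wr_comm₁ _ _)
    · exact (lift_eqW₂ (wrEmb Γ) (fun _ => wrX Γ) _).mpr (wr_comm₂ _)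
  obtain ⟨v, hv⟩ := h 1 _ (eqSys L) hsolW
  set t : Γ := v 0 with ht
  -- extract the commutation relations on the generators
  have hc1 : ∀ a ∈ (S : Set Γ), ∀ b ∈ (S : Set Γ), Commute a (t * b * t⁻¹) := by
    intro a ha b hb
    obtain ⟨⟨ia, hia⟩, ha'⟩ := List.mem_iff_get.mp ((hmem a).mpr ha)
    obtain ⟨⟨ib, hib⟩, hb'⟩ := List.mem_iff_get.mp ((hmem b).mpr hb)
    have hnpos : 0 < n := Nat.pos_of_ne_zero (by omega)
    have hjlt : n * ia + ib < n * n :=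
      calc n * ia + ib < n * ia + n := Nat.add_lt_add_left hib _
        _ = n * (ia + 1) := by ring
        _ ≤ n * n := Nat.mul_le_mul_left _ hia
    have hj : n * ia + ib < n * n + n := Nat.lt_of_lt_of_le hjlt (Nat.le_add_right _ _)
    have key := hv ⟨n * ia + ib, hj⟩
    unfold eqSys at key
    rw [dif_pos hjlt] at key
    have e1 : (n * ia + ib) / n = ia := by
      rw [Nat.mul_add_div hnpos, Nat.div_eq_of_lt hib, add_zero]
    have e2 : (n * ia + ib) % n = ib := by
      rw [Nat.mul_add_mod, Nat.mod_eq_of_lt hib]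
    simp only [← hn, e1, e2, ha', hb'] at key
    have := (lift_eqW₁ (MonoidHom.id Γ) v a b).mp key
    simpa using this
  have hc2 : ∀ a ∈ (S : Set Γ), Commute a (t ^ 2) := by
    intro a ha
    obtain ⟨⟨ia, hia⟩, ha'⟩ := List.mem_iff_get.mp ((hmem a).mpr ha)
    have hnot : ¬ (n * n + ia < n * n) := Nat.not_lt.mpr (Nat.le_add_right _ _)
    have key := hv ⟨n * n + ia, Nat.add_lt_add_left hia _⟩
    unfold eqSys at key
    rw [dif_neg hnot] at key
    have e1 : n * n + ia - n * n = ia := by omega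
    simp only [← hn, e1, ha'] at key
    have := (lift_eqW₂ (MonoidHom.id Γ) v a).mp key
    simpa using this
  -- assemble the result with n = 2
  refine ⟨t, 2, le_refl _, ?_, ?_⟩
  · intro p hp1 hp2 h1 hh1 h2 hh2
    have hp2' : p < 2 := by exact_mod_cast hp2
    have hp : p = 1 := by omega
    subst hp
    rw [pow_one]
    rw [← hS] at hh1 hh2
    exact closure_comm_conj hc1 h1 hh1 h2 hh2
  · intro m hm h1 hh1
    have hm' : m = 2 := by exact_mod_cast hm
    subst hm'
    rw [← hS] at hh1
    exact closure_comm_elt hc2 h1 hh1
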